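/- Suppose α is badly approximable and for each convergent denominator q there is an integer i_q with |i_q| < q such that q‖-t - i_q α‖ → 0 as q → ∞ along convergent denominators. Then i_q is eventually constant, and consequently t ∈ ℤα (mod 1). -/

import Mathlib

open Set Filter MeasureTheory

/-- Distance from a real number to the nearest integer. -/
noncomputable def nearInt (y : ℝ) : ℝ := |y - round y|

/-- Iterates of the Gauss map starting from `Int.fract α`. -/
noncomputable def gaussIter (α : ℝ) : ℕ → ℝ
  | 0 => Int.fract α
  | n + 1 => Int.fract (gaussIter α n)⁻¹

/-- `cfAq α k` is the partial quotient `a_{k+1}` of the continued fraction of `α`. -/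
noncomputable def cfAq (α : ℝ) (k : ℕ) : ℕ := (⌊(gaussIter α k)⁻¹⌋).toNat

/-- `cfQ α k` is the denominator `q_k` of the `k`-th convergent of `α`. -/
noncomputable def cfQ (α : ℝ) : ℕ → ℕ
  | 0 => 1
  | 1 => cfAq α 0
  | n + 2 => cfAq α (n + 1) * cfQ α (n + 1) + cfQ α n

/-- `cfP α k` is the numerator `p_k` of the `k`-th convergent of `α`. -/
noncomputable def cfP (α : ℝ) : ℕ → ℤ
  | 0 => ⌊α⌋
  | 1 => cfAq α 0 * ⌊α⌋ + 1
  | n + 2 => cfAq α (n + 1) * cfP α (n + 1) + cfP α n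

/-- `α` is badly approximable: its continued fraction partial quotients are bounded. -/
def BadlyApprox (α : ℝ) : Prop := ∃ B : ℕ, ∀ k, cfAq α k ≤ B

lemma nearInt_nonneg (y : ℝ) : 0 ≤ nearInt y := abs_nonneg _

lemma nearInt_le (y : ℝ) (n : ℤ) : nearInt y ≤ |y - n| := by
  rcases eq_or_ne n (round y) with h | h
  · simp [nearInt, h]
  · have h1 : |y - round y| ≤ 1/2 := abs_sub_round y
    have h2 : (1:ℝ) ≤ |(round y : ℝ) - n| := by
      have : round y - n ≠ 0 := sub_ne_zero.mpr (Ne.symm h)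
      have := Int.one_le_abs this
      exact_mod_cast this
    have h3 : |(round y : ℝ) - n| ≤ |(round y:ℝ) - y| + |y - n| := abs_sub_le _ _ _
    have h4 : |(round y:ℝ) - y| = |y - round y| := abs_sub_comm _ _
    simp only [nearInt]
    nlinarith [abs_nonneg (y - (n:ℝ))]

lemma nearInt_sub_le (a b : ℝ) : nearInt (a - b) ≤ nearInt a + nearInt b := by
  have h := nearInt_le (a - b) (round a - round b)
  have h2 : |a - b - ((round a : ℝ) - (round b : ℝ))| ≤ |a - round a| + |b - round b| := by
    have := abs_sub (a - round a) (b - round b)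
    calc |a - b - ((round a : ℝ) - (round b : ℝ))| = |(a - round a) - (b - round b)| := by ring_nf
      _ ≤ _ := this
  simp only [nearInt] at *
  push_cast at h
  linarith
variable {α : ℝ}

lemma gauss_prop (hα : Irrational α) : ∀ n, Irrational (gaussIter α n) ∧
    gaussIter α n ∈ Set.Ioo (0:ℝ) 1 := by
  intro n
  induction n with
  | zero =>
    have hdef : Int.fract α = α - (⌊α⌋ : ℝ) := rfl
    have hirr : Irrational (Int.fract α) := by
      rw [hdef]; exact hα.sub_intCast ⌊α⌋
    refine ⟨hirr, ⟨?_, Int.fract_lt_one α⟩⟩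
    rcases (Int.fract_nonneg α).lt_or_eq with h | h
    · exact h
    · exact absurd h.symm (by simpa using hirr.ne_rat 0)
  | succ n ih =>
    obtain ⟨hirr, h0, h1⟩ := ih
    have hinv : Irrational (gaussIter α n)⁻¹ := hirr.inv
    have hdef : gaussIter α (n+1) = (gaussIter α n)⁻¹ - (⌊(gaussIter α n)⁻¹⌋ : ℝ) := rfl
    have hirr' : Irrational (gaussIter α (n+1)) := by
      rw [hdef]; exact hinv.sub_intCast ⌊(gaussIter α n)⁻¹⌋
    refine ⟨hirr', ⟨?_, by simpa [gaussIter] using Int.fract_lt_one (gaussIter α n)⁻¹⟩⟩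
    rcases (Int.fract_nonneg (gaussIter α n)⁻¹).lt_or_eq with h | h
    · simpa [gaussIter] using h
    · refine absurd ?_ (by simpa using hirr'.ne_rat 0)
      show gaussIter α (n+1) = 0
      rw [show gaussIter α (n+1) = Int.fract (gaussIter α n)⁻¹ from rfl]
      exact h.symm

lemma gauss_pos (hα : Irrational α) (n : ℕ) : 0 < gaussIter α n := (gauss_prop hα n).2.1
lemma gauss_lt_one (hα : Irrational α) (n : ℕ) : gaussIter α n < 1 := (gauss_prop hα n).2.2

lemma one_lt_gauss_inv (hα : Irrational α) (n : ℕ) : 1 < (gaussIter α n)⁻¹ :=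
  (one_lt_inv₀ (gauss_pos hα n)).2 (gauss_lt_one hα n)

lemma cfAq_cast (hα : Irrational α) (n : ℕ) : (cfAq α n : ℤ) = ⌊(gaussIter α n)⁻¹⌋ := by
  have h : (0:ℤ) ≤ ⌊(gaussIter α n)⁻¹⌋ :=
    Int.floor_nonneg.2 (le_of_lt (lt_trans one_pos (one_lt_gauss_inv hα n)))
  simpa [cfAq] using Int.toNat_of_nonneg h

lemma cfAq_pos (hα : Irrational α) (n : ℕ) : 1 ≤ cfAq α n := by
  have : (1:ℤ) ≤ ⌊(gaussIter α n)⁻¹⌋ := Int.le_floor.2 (by exact_mod_cast (one_lt_gauss_inv hα n).le)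
  have := cfAq_cast hα n
  omega

lemma gauss_succ_eq (hα : Irrational α) (n : ℕ) :
    gaussIter α (n+1) = (gaussIter α n)⁻¹ - (cfAq α n : ℝ) := by
  have h := cfAq_cast hα n
  have : ((cfAq α n : ℤ) : ℝ) = ((⌊(gaussIter α n)⁻¹⌋ : ℤ) : ℝ) := by exact_mod_cast h
  simp only [gaussIter, Int.fract]
  push_cast at this ⊢
  linarith

lemma cfQ_pos (hα : Irrational α) : ∀ n, 1 ≤ cfQ α n := by
  intro n
  induction n using Nat.strong_induction_on with
  | _ n ih =>
    match n with
    | 0 => simp [cfQ]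
    | 1 => simpa [cfQ] using cfAq_pos hα 0
    | (n+2) =>
      have h1 := ih n (by omega)
      have h2 := ih (n+1) (by omega)
      have h3 := cfAq_pos hα (n+1)
      simp only [cfQ]
      nlinarith

lemma cfQ_mono (hα : Irrational α) (n : ℕ) : cfQ α n ≤ cfQ α (n+1) := by
  match n with
  | 0 => simpa [cfQ] using cfAq_pos hα 0
  | (n+1) =>
    have h1 := cfQ_pos hα n
    have h3 := cfAq_pos hα (n+1)
    show cfQ α (n+1) ≤ cfAq α (n+1) * cfQ α (n+1) + cfQ α n
    nlinarith

lemma cfQ_ge (hα : Irrational α) : ∀ n, n ≤ cfQ α n := by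
  intro n
  induction n using Nat.strong_induction_on with
  | _ n ih =>
    match n with
    | 0 => simp
    | 1 => exact cfQ_pos hα 1
    | (n+2) =>
      have h1 := ih (n+1) (by omega)
      have h2 := cfQ_pos hα n
      have h3 := cfAq_pos hα (n+1)
      show n+2 ≤ cfAq α (n+1) * cfQ α (n+1) + cfQ α n
      nlinarith

lemma cfQ_succ_le {B : ℕ} (hα : Irrational α) (hB : ∀ k, cfAq α k ≤ B) (n : ℕ) :
    cfQ α (n+1) ≤ (B+1) * cfQ α n := by
  match n with
  | 0 =>
    have := hB 0; simp only [cfQ]; omega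
  | (n+1) =>
    have h1 := cfQ_mono hα n
    have h2 := hB (n+1)
    show cfAq α (n+1) * cfQ α (n+1) + cfQ α n ≤ (B+1) * cfQ α (n+1)
    nlinarith

noncomputable def gaussProd (α : ℝ) (k : ℕ) : ℝ := ∏ j ∈ Finset.range (k+1), gaussIter α j
noncomputable def cfEta (α : ℝ) (k : ℕ) : ℝ := (cfQ α k : ℝ) * α - (cfP α k : ℝ)

lemma gaussProd_pos (hα : Irrational α) (k : ℕ) : 0 < gaussProd α k :=
  Finset.prod_pos (fun j _ => gauss_pos hα j)

lemma gaussProd_succ (k : ℕ) : gaussProd α (k+1) = gaussProd α k * gaussIter α (k+1) :=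
  Finset.prod_range_succ _ _

lemma gaussProd_lt_one (hα : Irrational α) (k : ℕ) : gaussProd α k < 1 := by
  induction k with
  | zero => simpa [gaussProd] using gauss_lt_one hα 0
  | succ k ih =>
    rw [gaussProd_succ]
    nlinarith [gauss_pos hα (k+1), gauss_lt_one hα (k+1), gaussProd_pos hα k]

lemma gaussProd_strict (hα : Irrational α) (k : ℕ) : gaussProd α (k+1) < gaussProd α k := by
  rw [gaussProd_succ]
  nlinarith [gauss_pos hα (k+1), gauss_lt_one hα (k+1), gaussProd_pos hα k]

lemma floor_alpha (hα0 : 0 < α) (hα1 : α < 1) : ⌊α⌋ = 0 :=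
  Int.floor_eq_zero_iff.2 ⟨hα0.le, hα1⟩

lemma gauss_zero (hα0 : 0 < α) (hα1 : α < 1) : gaussIter α 0 = α := by
  show Int.fract α = α
  exact Int.fract_eq_self.2 ⟨hα0.le, hα1⟩

lemma cfEta_eq (hα : Irrational α) (hα0 : 0 < α) (hα1 : α < 1) :
    ∀ k, cfEta α k = (-1)^k * gaussProd α k := by
  intro k
  induction k using Nat.strong_induction_on with
  | _ k ih =>
    match k with
    | 0 =>
      simp only [cfEta, cfQ, cfP, gaussProd, floor_alpha hα0 hα1]
      simp [gauss_zero hα0 hα1]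
    | 1 =>
      have h0 : gaussIter α 0 = α := gauss_zero hα0 hα1
      have h1 : gaussIter α 1 = α⁻¹ - (cfAq α 0 : ℝ) := by
        rw [gauss_succ_eq hα 0, h0]
      have hne : α ≠ 0 := ne_of_gt hα0
      simp only [cfEta, cfQ, cfP, floor_alpha hα0 hα1, gaussProd]
      rw [Finset.prod_range_succ, Finset.prod_range_one, h0, h1]
      push_cast
      field_simp
      ring
    | (k+2) =>
      have e1 := ih (k+1) (by omega)
      have e0 := ih k (by omega)
      have hx : gaussIter α (k+2) = (gaussIter α (k+1))⁻¹ - (cfAq α (k+1) : ℝ) :=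
        gauss_succ_eq hα (k+1)
      have hne : gaussIter α (k+1) ≠ 0 := ne_of_gt (gauss_pos hα (k+1))
      have hrec : cfEta α (k+2) = (cfAq α (k+1) : ℝ) * cfEta α (k+1) + cfEta α k := by
        simp only [cfEta, cfQ, cfP]
        push_cast
        ring
      have hinv : gaussIter α (k+1) * (gaussIter α (k+1))⁻¹ = 1 := mul_inv_cancel₀ hne
      rw [hrec, e1, e0, gaussProd_succ (k+1), gaussProd_succ k, hx]
      simp only [pow_succ]
      linear_combination (-(-1:ℝ)^k * gaussProd α k) * hinv

lemma cfDet (hα0 : 0 < α) (hα1 : α < 1) :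
    ∀ n, cfP α n * (cfQ α (n+1) : ℤ) - cfP α (n+1) * (cfQ α n : ℤ) = (-1)^(n+1) := by
  intro n
  induction n with
  | zero =>
    simp [cfP, cfQ, floor_alpha hα0 hα1]
  | succ n ih =>
    show cfP α (n+1) * (cfQ α (n+2) : ℤ) - cfP α (n+2) * (cfQ α (n+1) : ℤ) = (-1)^(n+2)
    simp only [cfQ, cfP, pow_succ]
    push_cast
    linear_combination -ih

lemma abs_cfEta (hα : Irrational α) (hα0 : 0 < α) (hα1 : α < 1) (k : ℕ) :
    |cfEta α k| = gaussProd α k := by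
  rw [cfEta_eq hα hα0 hα1 k, abs_mul, abs_pow, abs_neg, abs_one, one_pow, one_mul,
    abs_of_pos (gaussProd_pos hα k)]

lemma eta_lower (hα : Irrational α) (hα0 : 0 < α) (hα1 : α < 1) (k : ℕ) :
    1 < ((cfQ α k : ℝ) + (cfQ α (k+1) : ℝ)) * gaussProd α k := by
  have hdet := cfDet hα0 hα1 k
  have hdetR : (cfP α k : ℝ) * (cfQ α (k+1) : ℝ) - (cfP α (k+1) : ℝ) * (cfQ α k : ℝ)
      = (-1:ℝ)^(k+1) := by exact_mod_cast hdet
  have h1 : (cfQ α k : ℝ) * cfEta α (k+1) - (cfQ α (k+1) : ℝ) * cfEta α k = (-1:ℝ)^(k+1) := by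
    simp only [cfEta]
    linear_combination hdetR
  have h2 : (1:ℝ) = |(cfQ α k : ℝ) * cfEta α (k+1) - (cfQ α (k+1) : ℝ) * cfEta α k| := by
    rw [h1]; simp [abs_pow]
  have h3 : |(cfQ α k : ℝ) * cfEta α (k+1) - (cfQ α (k+1) : ℝ) * cfEta α k|
      ≤ (cfQ α k : ℝ) * gaussProd α (k+1) + (cfQ α (k+1) : ℝ) * gaussProd α k := by
    have := abs_sub ((cfQ α k : ℝ) * cfEta α (k+1)) ((cfQ α (k+1) : ℝ) * cfEta α k)
    rw [abs_mul, abs_mul, abs_cfEta hα hα0 hα1, abs_cfEta hα hα0 hα1,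
      Nat.abs_cast, Nat.abs_cast] at this
    exact this
  have h4 : gaussProd α (k+1) < gaussProd α k := gaussProd_strict hα k
  have h5 : (1:ℝ) ≤ (cfQ α k : ℝ) := by exact_mod_cast cfQ_pos hα k
  have h6 : (1:ℝ) ≤ (cfQ α (k+1) : ℝ) := by exact_mod_cast cfQ_pos hα (k+1)
  nlinarith [gaussProd_pos hα k, gaussProd_pos hα (k+1)]

lemma best_approx (hα : Irrational α) (hα0 : 0 < α) (hα1 : α < 1) (k : ℕ) (m p : ℤ)
    (hm : m ≠ 0) (hmlt : |m| < (cfQ α (k+1) : ℤ)) :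
    gaussProd α k ≤ |(m:ℝ) * α - (p:ℝ)| := by
  set q0 : ℤ := (cfQ α k : ℤ) with hq0
  set q1 : ℤ := (cfQ α (k+1) : ℤ) with hq1
  set p0 : ℤ := cfP α k with hp0
  set p1 : ℤ := cfP α (k+1) with hp1
  have hq0pos : 1 ≤ q0 := by rw [hq0]; exact_mod_cast cfQ_pos hα k
  have hq1pos : 1 ≤ q1 := by rw [hq1]; exact_mod_cast cfQ_pos hα (k+1)
  have hdet := cfDet hα0 hα1 k
  have hDD : (p0 * q1 - p1 * q0) * (p0 * q1 - p1 * q0) = 1 := by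
    rw [← hp0, ← hp1, ← hq0, ← hq1] at hdet
    rw [hdet, ← pow_add]
    exact Even.neg_one_pow ⟨k+1, by ring⟩
  obtain ⟨x, y, hx1, hx2⟩ : ∃ x y : ℤ, x * q0 + y * q1 = m ∧ x * p0 + y * p1 = p :=
    ⟨(p0 * q1 - p1 * q0) * (q1 * p - p1 * m), (p0 * q1 - p1 * q0) * (p0 * m - q0 * p),
      by linear_combination m * hDD, by linear_combination p * hDD⟩
  set g : ℝ := gaussIter α (k+1) with hg
  have hg0 : 0 < g := gauss_pos hα (k+1)
  have hg1 : g < 1 := gauss_lt_one hα (k+1)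
  have hstep : cfEta α (k+1) = -(cfEta α k) * g := by
    rw [cfEta_eq hα hα0 hα1 (k+1), cfEta_eq hα hα0 hα1 k, gaussProd_succ, pow_succ, hg]
    ring
  have hx1R : (x:ℝ) * (q0:ℝ) + (y:ℝ) * (q1:ℝ) = (m:ℝ) := by exact_mod_cast hx1
  have hx2R : (x:ℝ) * (p0:ℝ) + (y:ℝ) * (p1:ℝ) = (p:ℝ) := by exact_mod_cast hx2
  have hreal : (m:ℝ) * α - (p:ℝ) = cfEta α k * ((x:ℝ) - (y:ℝ) * g) := by
    have e0 : cfEta α k = (q0:ℝ) * α - (p0:ℝ) := by simp [cfEta, hq0, hp0]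
    have e1 : cfEta α (k+1) = (q1:ℝ) * α - (p1:ℝ) := by simp [cfEta, hq1, hp1]
    have : (m:ℝ) * α - (p:ℝ) = (x:ℝ) * cfEta α k + (y:ℝ) * cfEta α (k+1) := by
      rw [e0, e1]
      linear_combination (-α) * hx1R + hx2R
    rw [this, hstep]; ring
  have key : (1:ℝ) ≤ |(x:ℝ) - (y:ℝ) * g| := by
    rcases eq_or_ne y 0 with hy | hy
    · have hx : x ≠ 0 := by
        rintro rfl
        rw [hy] at hx1
        simp at hx1
        exact hm hx1.symm
      have : (1:ℝ) ≤ |(x:ℝ)| := by exact_mod_cast Int.one_le_abs hx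
      rw [hy]
      simpa using this
    · rcases eq_or_ne x 0 with hx | hx
      · exfalso
        rw [hx, zero_mul, zero_add] at hx1
        have h1 : 1 ≤ |y| := Int.one_le_abs hy
        have : |m| = |y| * q1 := by
          rw [← hx1, abs_mul, abs_of_nonneg (by omega : (0:ℤ) ≤ q1)]
        nlinarith
      · have hx' : x ≤ -1 ∨ 1 ≤ x := by omega
        have hy' : y ≤ -1 ∨ 1 ≤ y := by omega
        have hmabs₁ : m ≤ |m| := le_abs_self m
        have hmabs₂ : -|m| ≤ m := neg_abs_le m
        rcases hx' with hx' | hx' <;> rcases hy' with hy' | hy'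
        · exfalso; nlinarith
        · -- x ≤ -1, y ≥ 1 : x - y*g ≤ -1 - g
          have hxR : (x:ℝ) ≤ -1 := by exact_mod_cast hx'
          have hyR : (1:ℝ) ≤ (y:ℝ) := by exact_mod_cast hy'
          have : (1:ℝ) ≤ -((x:ℝ) - (y:ℝ) * g) := by nlinarith
          exact le_trans this (neg_le_abs _)
        · -- x ≥ 1, y ≤ -1
          have hxR : (1:ℝ) ≤ (x:ℝ) := by exact_mod_cast hx'
          have hyR : (y:ℝ) ≤ -1 := by exact_mod_cast hy'
          have : (1:ℝ) ≤ (x:ℝ) - (y:ℝ) * g := by nlinarith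
          exact le_trans this (le_abs_self _)
        · exfalso; nlinarith
  calc gaussProd α k = gaussProd α k * 1 := by ring
    _ ≤ gaussProd α k * |(x:ℝ) - (y:ℝ) * g| := by
        have := gaussProd_pos hα k
        nlinarith
    _ = |cfEta α k| * |(x:ℝ) - (y:ℝ) * g| := by rw [abs_cfEta hα hα0 hα1]
    _ = |(m:ℝ) * α - (p:ℝ)| := by rw [hreal, abs_mul]

lemma nearInt_ge_eta (hα : Irrational α) (hα0 : 0 < α) (hα1 : α < 1) (k : ℕ) (m : ℤ)
    (hm : m ≠ 0) (hmlt : |m| < (cfQ α (k+1) : ℤ)) :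
    gaussProd α k ≤ nearInt ((m:ℝ) * α) :=
  best_approx hα hα0 hα1 k m (round ((m:ℝ)*α)) hm hmlt

lemma nearInt_lowerq (hα : Irrational α) (hα0 : 0 < α) (hα1 : α < 1) (k : ℕ) (m : ℤ)
    (hm : m ≠ 0) (hmlt : |m| < (cfQ α (k+1) : ℤ)) :
    1 / (2 * (cfQ α (k+1) : ℝ)) < nearInt ((m:ℝ) * α) := by
  have h1 := nearInt_ge_eta hα hα0 hα1 k m hm hmlt
  have h2 := eta_lower hα hα0 hα1 k
  have hmono : (cfQ α k : ℝ) ≤ cfQ α (k+1) := by exact_mod_cast cfQ_mono hα k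
  have hq1 : (1:ℝ) ≤ (cfQ α (k+1) : ℝ) := by exact_mod_cast cfQ_pos hα (k+1)
  have hP := gaussProd_pos hα k
  have h3 : 1 / (2 * (cfQ α (k+1) : ℝ)) < gaussProd α k := by
    rw [div_lt_iff₀ (by linarith)]
    nlinarith
  linarith

lemma nearInt_lowerB {B : ℕ} (hα : Irrational α) (hα0 : 0 < α) (hα1 : α < 1)
    (hB : ∀ k, cfAq α k ≤ B) (m : ℤ) (hm : m ≠ 0) :
    1 / (2 * ((B:ℝ)+1) * |(m:ℝ)|) < nearInt ((m:ℝ) * α) := by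
  obtain ⟨k, hk, hk2⟩ : ∃ k, |m| < (cfQ α (k+1) : ℤ) ∧ (cfQ α k : ℤ) ≤ |m| := by
    have hex : ∃ k, |m| < (cfQ α (k+1) : ℤ) := by
      refine ⟨m.natAbs, ?_⟩
      have h := cfQ_ge hα (m.natAbs + 1)
      have h2 : (m.natAbs + 1 : ℤ) ≤ (cfQ α (m.natAbs + 1) : ℤ) := by exact_mod_cast h
      have h3 : |m| = (m.natAbs : ℤ) := Int.abs_eq_natAbs m
      omega
    classical
    refine ⟨Nat.find hex, Nat.find_spec hex, ?_⟩
    rcases h : Nat.find hex with _ | j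
    · have : (1:ℤ) ≤ |m| := Int.one_le_abs hm
      simpa [cfQ] using this
    · have hmin : ¬ (|m| < (cfQ α (j+1) : ℤ)) := Nat.find_min hex (by omega)
      omega
  have h1 := nearInt_lowerq hα hα0 hα1 k m hm hk
  have hle : (cfQ α (k+1) : ℝ) ≤ ((B:ℝ)+1) * (cfQ α k : ℝ) := by
    have := cfQ_succ_le hα hB k
    exact_mod_cast this
  have hmR : (cfQ α k : ℝ) ≤ |(m:ℝ)| := by exact_mod_cast hk2
  have hq1 : (1:ℝ) ≤ (cfQ α (k+1) : ℝ) := by exact_mod_cast cfQ_pos hα (k+1)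
  have hqk : (1:ℝ) ≤ (cfQ α k : ℝ) := by exact_mod_cast cfQ_pos hα k
  have hB1 : (1:ℝ) ≤ (B:ℝ)+1 := by have : (0:ℝ) ≤ (B:ℝ) := Nat.cast_nonneg B; linarith
  have h4 : 1 / (2 * ((B:ℝ)+1) * |(m:ℝ)|) ≤ 1 / (2 * (cfQ α (k+1) : ℝ)) := by
    apply one_div_le_one_div_of_le (by linarith)
    nlinarith
  linarith


set_option maxHeartbeats 1000000 in
/-- If `α` is badly approximable and `i_q` are integers with `|i_q| < q` such that
`q‖-t - i_q α‖ → 0` along convergent denominators `q`, then `i_q` is eventually constant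
and `t ∈ ℤα (mod 1)`. -/
theorem stmt19 (α : ℝ) (hα : Irrational α) (hα0 : 0 < α) (hα1 : α < 1)
    (hbad : BadlyApprox α) (t : ℝ) (ht : t ∈ Set.Ico (0:ℝ) 1)
    (i : ℕ → ℤ) (hi : ∀ k, |i k| < (cfQ α k : ℤ))
    (hlim : Filter.Tendsto (fun k : ℕ => (cfQ α k : ℝ) * nearInt (-t - (i k : ℝ) * α))
      Filter.atTop (nhds 0)) :
    (∃ N : ℕ, ∀ k, N ≤ k → i k = i N) ∧ (∃ n m : ℤ, t = (n : ℝ) * α + m) := by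
  obtain ⟨B, hB⟩ := hbad
  set ε : ℝ := 1/(8*((B:ℝ)+1)^2) with hεdef
  have hεpos : 0 < ε := by positivity
  have hev : ∀ᶠ k in Filter.atTop, (cfQ α k : ℝ) * nearInt (-t - (i k : ℝ) * α) < ε :=
    hlim.eventually_lt_const hεpos
  obtain ⟨N, hN⟩ := Filter.eventually_atTop.1 hev
  have hB1 : (1:ℝ) ≤ (B:ℝ)+1 := by have : (0:ℝ) ≤ (B:ℝ) := Nat.cast_nonneg B; linarith
  have hstep : ∀ k, N ≤ k → i (k+1) = i k := by
    intro k hk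
    by_contra hne
    set m := i (k+1) - i k with hm
    have hm0 : m ≠ 0 := sub_ne_zero.mpr hne
    have hq_le : (cfQ α k : ℝ) ≤ cfQ α (k+1) := by exact_mod_cast cfQ_mono hα k
    have hqk : (1:ℝ) ≤ cfQ α k := by exact_mod_cast cfQ_pos hα k
    have hqk1 : (1:ℝ) ≤ cfQ α (k+1) := by exact_mod_cast cfQ_pos hα (k+1)
    have hmabs : |m| < 2 * (cfQ α (k+1) : ℤ) := by
      have h1 := hi k; have h2 := hi (k+1)
      have h3 : (cfQ α k : ℤ) ≤ (cfQ α (k+1) : ℤ) := by exact_mod_cast cfQ_mono hα k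
      have h4 := abs_sub (i (k+1)) (i k)
      rw [hm]; linarith
    have hmR : |(m:ℝ)| < 2 * (cfQ α (k+1) : ℝ) := by exact_mod_cast hmabs
    have hmRpos : 0 < |(m:ℝ)| := by
      simp only [abs_pos]
      exact_mod_cast hm0
    have htri : nearInt ((m:ℝ)*α) ≤ nearInt (-t - (i k:ℝ)*α) + nearInt (-t - (i (k+1):ℝ)*α) := by
      have h := nearInt_sub_le (-t - (i k:ℝ)*α) (-t - (i (k+1):ℝ)*α)
      have heq : (-t - (i k:ℝ)*α) - (-t - (i (k+1):ℝ)*α) = (m:ℝ)*α := by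
        rw [hm]; push_cast; ring
      rwa [heq] at h
    have f1 := hN k hk
    have f2 := hN (k+1) (by omega)
    have f4 := nearInt_lowerB hα hα0 hα1 hB m hm0
    have f6 : (cfQ α (k+1) : ℝ) ≤ ((B:ℝ)+1) * (cfQ α k : ℝ) := by
      exact_mod_cast cfQ_succ_le hα hB k
    set n := nearInt ((m:ℝ)*α) with hn
    set n1 := nearInt (-t - (i k:ℝ)*α) with hn1
    set n2 := nearInt (-t - (i (k+1):ℝ)*α) with hn2
    have hn1nn : 0 ≤ n1 := nearInt_nonneg _
    have hn2nn : 0 ≤ n2 := nearInt_nonneg _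
    have hnnn : 0 ≤ n := nearInt_nonneg _
    -- s1 : 1 < 2(B+1)|m| * n
    have s1 : 1 < 2*((B:ℝ)+1)*|(m:ℝ)| * n := by
      rw [div_lt_iff₀ (by positivity)] at f4
      linarith [f4]
    have s2 : 2*((B:ℝ)+1)*|(m:ℝ)| * n ≤ 4*((B:ℝ)+1)*(cfQ α (k+1):ℝ) * n := by
      have h := mul_le_mul_of_nonneg_right (le_of_lt hmR) hnnn
      have h2 := mul_le_mul_of_nonneg_left h (show (0:ℝ) ≤ 2*((B:ℝ)+1) by linarith)
      nlinarith [h2]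
    have s3 : (cfQ α (k+1):ℝ) * n ≤ (cfQ α (k+1):ℝ) * n1 + (cfQ α (k+1):ℝ) * n2 := by
      have h := mul_le_mul_of_nonneg_left htri (show (0:ℝ) ≤ (cfQ α (k+1):ℝ) by linarith)
      nlinarith [h]
    have s4 : (cfQ α (k+1):ℝ) * n1 ≤ ((B:ℝ)+1) * ((cfQ α k : ℝ) * n1) := by
      have h := mul_le_mul_of_nonneg_right f6 hn1nn
      nlinarith [h]
    have s5 : (cfQ α (k+1):ℝ) * n1 < ((B:ℝ)+1) * ε := by
      have h := mul_lt_mul_of_pos_left f1 (show (0:ℝ) < (B:ℝ)+1 by linarith)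
      linarith
    have s6 : (cfQ α (k+1):ℝ) * n2 < ((B:ℝ)+1) * ε := by
      have h : ε ≤ ((B:ℝ)+1)*ε := by
        nlinarith [mul_nonneg (Nat.cast_nonneg (α := ℝ) B) hεpos.le]
      linarith
    have s7 : 1 < 4*((B:ℝ)+1)*((cfQ α (k+1):ℝ) * n1 + (cfQ α (k+1):ℝ) * n2) := by
      have h := mul_le_mul_of_nonneg_left s3 (show (0:ℝ) ≤ 4*((B:ℝ)+1) by linarith)
      nlinarith [h]
    have s8 : 1 < 8*((B:ℝ)+1)^2 * ε := by
      have h56 : (cfQ α (k+1):ℝ) * n1 + (cfQ α (k+1):ℝ) * n2 < 2*((B:ℝ)+1)*ε := by linarith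
      have h := mul_lt_mul_of_pos_left h56 (show (0:ℝ) < 4*((B:ℝ)+1) by linarith)
      nlinarith [h]
    rw [hεdef] at s8
    have : 8*((B:ℝ)+1)^2 * (1/(8*((B:ℝ)+1)^2)) = 1 := by
      field_simp
    linarith
  have hconst : ∀ k, N ≤ k → i k = i N := by
    intro k hk
    induction k, hk using Nat.le_induction with
    | base => rfl
    | succ n hn ih => rw [hstep n hn, ih]
  refine ⟨⟨N, hconst⟩, ?_⟩
  set c := i N with hc
  have hzero : nearInt (-t - (c:ℝ)*α) = 0 := by
    by_contra h0
    have hpos : 0 < nearInt (-t - (c:ℝ)*α) := lt_of_le_of_ne (nearInt_nonneg _) (Ne.symm h0)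
    have hev2 := hlim.eventually_lt_const hpos
    obtain ⟨M, hM⟩ := Filter.eventually_atTop.1 hev2
    have h1 := hM (max N M) (le_max_right _ _)
    have h2 : i (max N M) = c := hconst (max N M) (le_max_left _ _)
    rw [h2] at h1
    have hq : (1:ℝ) ≤ cfQ α (max N M) := by exact_mod_cast cfQ_pos hα (max N M)
    nlinarith [nearInt_nonneg (-t - (c:ℝ)*α)]
  have hfin : -t - (c:ℝ)*α - round (-t - (c:ℝ)*α) = 0 := by
    have := abs_eq_zero.1 hzero
    simpa [nearInt] using hzero
  refine ⟨-c, -(round (-t - (c:ℝ)*α)), ?_⟩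
  push_cast
  linarith
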